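/- Let s < r < t be real numbers and let α > 0. Then for every u ∈ H one has ‖(1+P)^r u‖ ≤ α·‖(1+P)^t u‖ + α^((s−r)/(t−r))·‖(1+P)^s u‖, where for a real exponent a the operator (1+P)^a is obtained by applying the continuous functional calculus of the self-adjoint operator P to the function x ↦ (1+x)^a (well defined since P is nonnegative). -/

import Mathlib

open scoped InnerProductSpace

private lemma pointwise_interp (s r t α : ℝ) (hsr : s < r) (hrt : r < t)
    (hα : 0 < α) (y : ℝ) (hy : 1 ≤ y) :
    y ^ r ≤ α * y ^ t + α ^ ((s - r) / (t - r)) * y ^ s := by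
  have hy0 : (0 : ℝ) < y := lt_of_lt_of_le one_pos hy
  have htr : (0 : ℝ) < t - r := by linarith
  set β := α ^ ((s - r) / (t - r)) with hβ
  have hβ0 : 0 < β := Real.rpow_pos_of_pos hα _
  rcases le_or_gt α⁻¹ (y ^ (t - r)) with h | h
  · have h1 : y ^ r ≤ α * y ^ t := by
      have hyt : α * y ^ t = α * (y ^ (t - r) * y ^ r) := by
        rw [← Real.rpow_add hy0]; ring_nf
      rw [hyt]
      calc y ^ r = α * (α⁻¹ * y ^ r) := by field_simp
        _ ≤ α * (y ^ (t - r) * y ^ r) :=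
            mul_le_mul_of_nonneg_left
              (mul_le_mul_of_nonneg_right h (Real.rpow_nonneg hy0.le r)) hα.le
    have h2 : 0 ≤ β * y ^ s := le_of_lt (mul_pos hβ0 (Real.rpow_pos_of_pos hy0 s))
    linarith
  · have key : y ^ (r - s) = (y ^ (t - r)) ^ ((r - s) / (t - r)) := by
      rw [← Real.rpow_mul hy0.le]
      congr 1
      field_simp
    have h1 : y ^ (r - s) ≤ β := by
      rw [key]
      calc (y ^ (t - r)) ^ ((r - s) / (t - r))
          ≤ (α⁻¹) ^ ((r - s) / (t - r)) :=
            Real.rpow_le_rpow (Real.rpow_nonneg hy0.le _) h.le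
              (div_nonneg (by linarith) htr.le)
        _ = β := by
            rw [hβ, Real.inv_rpow hα.le, ← Real.rpow_neg hα.le]
            congr 1; ring
    have h2 : y ^ r ≤ β * y ^ s := by
      have : y ^ r = y ^ (r - s) * y ^ s := by rw [← Real.rpow_add hy0]; ring_nf
      rw [this]
      exact mul_le_mul_of_nonneg_right h1 (Real.rpow_nonneg hy0.le s)
    have h3 : 0 ≤ α * y ^ t := le_of_lt (mul_pos hα (Real.rpow_pos_of_pos hy0 t))
    linarith

/-- Interpolation inequality (Lemma 3.1, bounded-operator form):
for `s < r < t` and `α > 0`, `‖(1+P)^r u‖ ≤ α‖(1+P)^t u‖ + α^((s-r)/(t-r))‖(1+P)^s u‖`,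
where `(1+P)^a` is defined by the continuous functional calculus of the nonnegative
self-adjoint bounded operator `P`. -/
theorem interpolation_inequality
    {H : Type*} [NormedAddCommGroup H] [InnerProductSpace ℂ H] [CompleteSpace H]
    (P : H →L[ℂ] H) (hP : IsSelfAdjoint P)
    (hPnn : ∀ u : H, 0 ≤ (inner ℂ (P u) u : ℂ).re)
    (s r t : ℝ) (hsr : s < r) (hrt : r < t)
    (α : ℝ) (hα : 0 < α) (u : H) :
    ‖cfc (fun x : ℝ => (1 + x) ^ r) P u‖ ≤
      α * ‖cfc (fun x : ℝ => (1 + x) ^ t) P u‖ +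
        α ^ ((s - r) / (t - r)) * ‖cfc (fun x : ℝ => (1 + x) ^ s) P u‖ := by
  set β := α ^ ((s - r) / (t - r)) with hβ
  have hβ0 : 0 < β := Real.rpow_pos_of_pos hα _
  -- P is positive, so its spectrum is nonnegative
  have hPpos : P.IsPositive := ⟨ContinuousLinearMap.isSelfAdjoint_iff_isSymmetric.mp hP, fun x => hPnn x⟩
  have hP0 : (0 : H →L[ℂ] H) ≤ P := (ContinuousLinearMap.nonneg_iff_isPositive P).mpr hPpos
  have hspec : ∀ x ∈ spectrum ℝ P, (0 : ℝ) ≤ x := fun x hx =>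
    spectrum_nonneg_of_nonneg hP0 hx
  -- continuity of the functions involved
  have hcont : ∀ a : ℝ, ContinuousOn (fun x : ℝ => (1 + x) ^ a) (spectrum ℝ P) := by
    intro a x hx
    have h1x : (1 : ℝ) + x ≠ 0 := by have := hspec x hx; positivity
    exact ((Real.continuousAt_rpow_const (1 + x) a (Or.inl h1x)).comp
      (by fun_prop)).continuousWithinAt
  have hcontg : ContinuousOn (fun x : ℝ => α * (1 + x) ^ t + β * (1 + x) ^ s)
      (spectrum ℝ P) :=
    (continuousOn_const.mul (hcont t)).add (continuousOn_const.mul (hcont s))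
  set A := cfc (fun x : ℝ => (1 + x) ^ r) P with hA
  set T := cfc (fun x : ℝ => (1 + x) ^ t) P with hT
  set S := cfc (fun x : ℝ => (1 + x) ^ s) P with hS
  set B := cfc (fun x : ℝ => α * (1 + x) ^ t + β * (1 + x) ^ s) P with hBdef
  have hAsa : IsSelfAdjoint A := cfc_predicate _ P
  have hBsa : IsSelfAdjoint B := cfc_predicate _ P
  -- pointwise inequality on the spectrum, squared
  have hsq : cfc (fun x : ℝ => ((1 + x) ^ r) ^ 2) P ≤
      cfc (fun x : ℝ => (α * (1 + x) ^ t + β * (1 + x) ^ s) ^ 2) P := by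
    apply cfc_mono
    · intro x hx
      have h1x : (1 : ℝ) ≤ 1 + x := by linarith [hspec x hx]
      have hpt := pointwise_interp s r t α hsr hrt hα (1 + x) h1x
      have hnn : (0 : ℝ) ≤ (1 + x) ^ r := Real.rpow_nonneg (by linarith) r
      exact pow_le_pow_left₀ hnn hpt 2
    · exact (hcont r).pow 2
    · exact hcontg.pow 2
  have hle : A ^ 2 ≤ B ^ 2 := by
    rwa [cfc_pow _ 2 P (hcont r), cfc_pow _ 2 P hcontg] at hsq
  -- norms squared via the quadratic form
  have hnormsq : ∀ (C : H →L[ℂ] H), IsSelfAdjoint C →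
      ‖C u‖ ^ 2 = RCLike.re (inner ℂ ((C ^ 2) u) u : ℂ) := by
    intro C hC
    have h2 : (C ^ 2) u = C (C u) := by
      rw [sq]; rfl
    have h3 : (inner ℂ (C (C u)) u : ℂ) = inner ℂ (C u) (C u) := by
      exact_mod_cast (ContinuousLinearMap.isSelfAdjoint_iff_isSymmetric.mp hC) (C u) u
    rw [h2, h3, @inner_self_eq_norm_sq ℂ]
  have hord : RCLike.re (inner ℂ ((A ^ 2) u) u : ℂ) ≤ RCLike.re (inner ℂ ((B ^ 2) u) u : ℂ) := by
    have hpos := ((ContinuousLinearMap.le_def (A ^ 2) (B ^ 2)).mp hle).inner_nonneg_left u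
    simp only [ContinuousLinearMap.reApplyInnerSelf, ContinuousLinearMap.sub_apply,
      inner_sub_left, map_sub] at hpos
    have hpos' := (RCLike.nonneg_iff.mp hpos).1
    rw [map_sub] at hpos'
    linarith
  have hAB : ‖A u‖ ≤ ‖B u‖ := by
    have h1 : ‖A u‖ ^ 2 ≤ ‖B u‖ ^ 2 := by
      rw [hnormsq A hAsa, hnormsq B hBsa]; exact hord
    exact (pow_le_pow_iff_left₀ (norm_nonneg _) (norm_nonneg _) two_ne_zero).mp h1
  -- decompose B
  have hBdecomp : B = α • T + β • S := by
    rw [hBdef, hT, hS, ← cfc_smul α _ P (hcont t), ← cfc_smul β _ P (hcont s),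
      ← cfc_add P (fun x => α • (1 + x) ^ t) (fun x => β • (1 + x) ^ s) ((hcont t).const_smul α) ((hcont s).const_smul β)]
    simp [smul_eq_mul]
  calc ‖A u‖ ≤ ‖B u‖ := hAB
    _ = ‖α • T u + β • S u‖ := by rw [hBdecomp]; rfl
    _ ≤ ‖α • T u‖ + ‖β • S u‖ := norm_add_le _ _
    _ = α * ‖T u‖ + β * ‖S u‖ := by
        rw [norm_smul, norm_smul, Real.norm_eq_abs, Real.norm_eq_abs,
          abs_of_pos hα, abs_of_pos hβ0]
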